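/- For any interval [σ,τ] in the pattern poset, the map π ↦ 1 ⊕ π gives an isomorphism [1^k ⊕ σ, 1^k ⊕ τ] ≅ [1^{k+1} ⊕ σ, 1^{k+1} ⊕ τ] whenever k ≥ |τ| − |σ| − 1. More generally, if τ = 1^ℓ ⊕ τ' for some τ', the isomorphism holds whenever k ≥ |τ| − |σ| − ℓ − 1. -/

import Mathlib

open scoped Classical

/-- The set of all (finite) permutations, as patterns: a permutation of length `n`
together with its length. -/
abbrev PermPt := Σ n : ℕ, Equiv.Perm (Fin n)

/-- Pattern containment order: `σ` occurs in `τ` if there is a strictly monotone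
choice of positions on which `τ` is order-isomorphic to `σ`. -/
def ple (σ τ : PermPt) : Prop :=
  ∃ f : Fin σ.1 → Fin τ.1, StrictMono f ∧
    ∀ a b : Fin σ.1, σ.2 a ≤ σ.2 b ↔ τ.2 (f a) ≤ τ.2 (f b)

/-- Strict pattern containment. -/
def plt (σ τ : PermPt) : Prop := ple σ τ ∧ ¬ ple τ σ

/-- Direct sum of permutations. -/
def pds {m n : ℕ} (α : Equiv.Perm (Fin m)) (β : Equiv.Perm (Fin n)) :
    Equiv.Perm (Fin (m + n)) :=
  finSumFinEquiv.symm.trans ((Equiv.sumCongr α β).trans finSumFinEquiv)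

/-- Skew sum of permutations. -/
def pss {m n : ℕ} (α : Equiv.Perm (Fin m)) (β : Equiv.Perm (Fin n)) :
    Equiv.Perm (Fin (m + n)) :=
  finSumFinEquiv.symm.trans
    (((Equiv.sumCongr α β).trans (Equiv.sumComm (Fin m) (Fin n))).trans
      (finSumFinEquiv.trans (finCongr (Nat.add_comm n m))))

/-- Direct sum, as an operation on `PermPt`. -/
def pdsP (a b : PermPt) : PermPt := ⟨a.1 + b.1, pds a.2 b.2⟩

/-- Skew sum, as an operation on `PermPt`. -/
def pssP (a b : PermPt) : PermPt := ⟨a.1 + b.1, pss a.2 b.2⟩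

/-- The empty permutation. -/
def pempty : PermPt := ⟨0, 1⟩

/-- The permutation `1` of length one. -/
def pone : PermPt := ⟨1, 1⟩

/-- A permutation is decomposable if it is the direct sum of two nonempty
permutations, i.e. some proper nonempty initial segment of positions is mapped
to the corresponding initial segment of values. -/
def Decomp {n : ℕ} (σ : Equiv.Perm (Fin n)) : Prop :=
  ∃ m : ℕ, 0 < m ∧ m < n ∧ ∀ i : Fin n, (i : ℕ) < m → (σ i : ℕ) < m

/-- Disconnectedness of a set of permutations under pattern containment:
it splits into two nonempty parts with no comparabilities between them. -/
def Disconn (S : Set PermPt) : Prop :=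
  ∃ A B : Set PermPt, A ∪ B = S ∧ A.Nonempty ∧ B.Nonempty ∧
    ∀ x ∈ A, ∀ y ∈ B, ¬ ple x y ∧ ¬ ple y x

/-- The identity permutation `1^k` of length `k`. -/
def ones (k : ℕ) : PermPt := ⟨k, 1⟩

/-- `F` is an order isomorphism from the interval `[σ,τ]` onto `[σ',τ']`. -/
def IntervalIso (σ τ σ' τ' : PermPt) (F : PermPt → PermPt) : Prop :=
  (∀ π : PermPt, ple σ π → ple π τ → ple σ' (F π) ∧ ple (F π) τ') ∧
  (∀ ρ : PermPt, ple σ' ρ → ple ρ τ' → ∃ π, ple σ π ∧ ple π τ ∧ ρ = F π) ∧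
  (∀ π π' : PermPt, ple σ π → ple π τ → ple σ π' → ple π' τ →
    (ple π π' ↔ ple (F π) (F π')))

/-- The value of a pattern at a natural-number position (junk `0` out of range). -/
def vp (p : PermPt) (x : ℕ) : ℕ := if h : x < p.1 then (p.2 ⟨x, h⟩ : ℕ) else 0

lemma vp_eq (p : PermPt) (x : ℕ) (hx : x < p.1) : vp p x = (p.2 ⟨x, hx⟩ : ℕ) :=
  dif_pos hx

lemma vp_lt (p : PermPt) (x : ℕ) (hx : x < p.1) : vp p x < p.1 := by
  rw [vp_eq p x hx]; exact (p.2 ⟨x, hx⟩).isLt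

lemma vp_out (p : PermPt) (x : ℕ) (hx : ¬ x < p.1) : vp p x = 0 := dif_neg hx

lemma vp_inj (p : PermPt) {x y : ℕ} (hx : x < p.1) (hy : y < p.1)
    (h : vp p x = vp p y) : x = y := by
  rw [vp_eq p x hx, vp_eq p y hy] at h
  exact congrArg Fin.val (p.2.injective (Fin.ext h))

lemma pds_castAdd {m n : ℕ} (α : Equiv.Perm (Fin m)) (β : Equiv.Perm (Fin n))
    (i : Fin m) : pds α β (Fin.castAdd n i) = Fin.castAdd n (α i) := by
  simp [pds]

lemma pds_natAdd {m n : ℕ} (α : Equiv.Perm (Fin m)) (β : Equiv.Perm (Fin n))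
    (j : Fin n) : pds α β (Fin.natAdd m j) = Fin.natAdd m (β j) := by
  simp [pds]

lemma vp_pdsP (a b : PermPt) (x : ℕ) (hx : x < a.1 + b.1) :
    vp (pdsP a b) x = if x < a.1 then vp a x else a.1 + vp b (x - a.1) := by
  obtain ⟨m, α⟩ := a; obtain ⟨n, β⟩ := b
  have hx2 : x < m + n := hx
  by_cases h : x < m
  · rw [if_pos h]
    rw [show vp (pdsP ⟨m, α⟩ ⟨n, β⟩) x = ((pds α β) ⟨x, hx⟩ : ℕ) from vp_eq _ x hx,
      vp_eq _ x h]
    exact congrArg Fin.val (pds_castAdd α β ⟨x, h⟩)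
  · have hx' : x - m < n := by omega
    rw [if_neg h]
    rw [show vp (pdsP ⟨m, α⟩ ⟨n, β⟩) x = ((pds α β) ⟨x, hx⟩ : ℕ) from vp_eq _ x hx,
      show vp (⟨n, β⟩ : PermPt) (x - m) = (β ⟨x - m, hx'⟩ : ℕ) from vp_eq _ _ hx']
    have hc : (⟨x, hx⟩ : Fin (m + n)) = Fin.natAdd m ⟨x - m, hx'⟩ := by
      apply Fin.ext
      show x = m + (x - m)
      omega
    rw [hc, pds_natAdd]
    rfl

lemma vp_ones (k x : ℕ) (h : x < k) : vp (ones k) x = x := by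
  simp [vp, ones, h]
  rfl

lemma vp_ones_pdsP (k : ℕ) (p : PermPt) (x : ℕ) (hx : x < k + p.1) :
    vp (pdsP (ones k) p) x = if x < k then x else k + vp p (x - k) := by
  have h1 : (ones k).1 = k := rfl
  rw [vp_pdsP (ones k) p x hx, h1]
  by_cases h : x < k
  · simp only [if_pos h, vp_ones k x h]
  · simp only [if_neg h]

lemma ple_iff {p q : PermPt} : ple p q ↔ ∃ f : ℕ → ℕ,
    (∀ x, x < p.1 → f x < q.1) ∧
    (∀ x y, x < y → y < p.1 → f x < f y) ∧
    (∀ x y, x < p.1 → y < p.1 → (vp p x ≤ vp p y ↔ vp q (f x) ≤ vp q (f y))) := by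
  constructor
  · rintro ⟨f, hmono, hiff⟩
    refine ⟨fun x => if h : x < p.1 then (f ⟨x, h⟩ : ℕ) else 0, ?_, ?_, ?_⟩
    · intro x hx; simpa only [dif_pos hx] using (f ⟨x, hx⟩).isLt
    · intro x y hxy hy
      have hx : x < p.1 := lt_trans hxy hy
      simp only [dif_pos hx, dif_pos hy]
      exact hmono (show (⟨x, hx⟩ : Fin p.1) < ⟨y, hy⟩ from hxy)
    · intro x y hx hy
      have h := hiff ⟨x, hx⟩ ⟨y, hy⟩
      rw [Fin.le_def, Fin.le_def] at h
      dsimp only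
      rw [dif_pos hx, dif_pos hy, vp_eq p x hx, vp_eq p y hy,
        vp_eq q _ (f ⟨x, hx⟩).isLt, vp_eq q _ (f ⟨y, hy⟩).isLt]
      simpa only [Fin.eta] using h
  · rintro ⟨f, hb, hm, hiff⟩
    refine ⟨fun i => ⟨f i, hb i i.isLt⟩, ?_, ?_⟩
    · intro a b hab
      exact hm a b hab b.isLt
    · intro a b
      have h := hiff a b a.isLt b.isLt
      rw [vp_eq p _ a.isLt, vp_eq p _ b.isLt, vp_eq q _ (hb _ a.isLt),
        vp_eq q _ (hb _ b.isLt)] at h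
      simp only [Fin.eta] at h
      rw [Fin.le_def, Fin.le_def]
      exact h

lemma ple_refl (p : PermPt) : ple p p := ⟨id, strictMono_id, fun _ _ => Iff.rfl⟩

lemma ple_len {p q : PermPt} (h : ple p q) : p.1 ≤ q.1 := by
  obtain ⟨f, hf, -⟩ := h
  simpa using Fintype.card_le_of_injective f hf.injective

lemma fin_le_strictMono {n : ℕ} {f : Fin n → Fin n} (hf : StrictMono f)
    (i : Fin n) : (i : ℕ) ≤ (f i : ℕ) := by
  have key : ∀ m (hm : m < n), m ≤ (f ⟨m, hm⟩ : ℕ) := by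
    intro m
    induction m with
    | zero => intro hm; exact Nat.zero_le _
    | succ p ih =>
      intro hm
      have h2 := hf (show (⟨p, by omega⟩ : Fin n) < ⟨p + 1, hm⟩ from by
        exact Fin.mk_lt_mk.mpr (by omega))
      have h3 := ih (by omega)
      have h4 := Fin.lt_def.mp h2
      omega
  have := key (i : ℕ) i.isLt
  simpa using this

lemma strictMono_fin_eq_id {n : ℕ} {f : Fin n → Fin n} (hf : StrictMono f)
    (i : Fin n) : f i = i := by
  have h1 := fin_le_strictMono hf i
  have h2 : StrictMono fun j : Fin n => (f j.rev).rev := by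
    intro a b hab
    exact Fin.rev_lt_rev.mpr (hf (Fin.rev_lt_rev.mpr hab))
  have h3 := fin_le_strictMono h2 i.rev
  rw [Fin.rev_rev] at h3
  have hr1 : (i.rev : ℕ) = n - ((i : ℕ) + 1) := Fin.val_rev i
  have hr2 : ((f i).rev : ℕ) = n - (((f i) : ℕ) + 1) := Fin.val_rev _
  have hfi := (f i).isLt
  have hi := i.isLt
  apply Fin.ext
  omega

lemma perm_eq_of_order {n : ℕ} {α β : Equiv.Perm (Fin n)}
    (h : ∀ a b, α a ≤ α b ↔ β a ≤ β b) : α = β := by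
  have hm : StrictMono fun x => β (α.symm x) := by
    intro x y hxy
    have h2 : β (α.symm x) ≤ β (α.symm y) := by
      rw [← h]; simpa using hxy.le
    have hne : β (α.symm x) ≠ β (α.symm y) := by
      intro he
      exact hxy.ne (by simpa using congrArg α (α.symm.injective (β.injective he)))
    exact lt_of_le_of_ne h2 hne
  ext i
  have h4 := strictMono_fin_eq_id hm (α i)
  simpa using congrArg Fin.val h4.symm

lemma ple_eq_of_len {p q : PermPt} (h : ple p q) (hl : p.1 = q.1) : p = q := by
  obtain ⟨m, α⟩ := p; obtain ⟨m', β⟩ := q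
  dsimp at hl; subst hl
  obtain ⟨f, hf, hiff⟩ := h
  have hid : ∀ i, f i = i := strictMono_fin_eq_id hf
  have ho : ∀ a b, α a ≤ α b ↔ β a ≤ β b := by
    intro a b; rw [hiff a b, hid a, hid b]
  exact congrArg (Sigma.mk m) (perm_eq_of_order ho)

lemma permPt_ext {p q : PermPt} (h1 : p.1 = q.1) (h2 : ∀ x, vp p x = vp q x) :
    p = q := by
  obtain ⟨m, α⟩ := p; obtain ⟨m', β⟩ := q
  dsimp at h1; subst h1
  refine congrArg (Sigma.mk m) (Equiv.ext fun i => Fin.ext ?_)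
  have h3 := h2 (i : ℕ)
  rw [show vp (⟨m, α⟩ : PermPt) (i : ℕ) = (α ⟨(i : ℕ), i.isLt⟩ : ℕ) from vp_eq _ _ i.isLt,
    show vp (⟨m, β⟩ : PermPt) (i : ℕ) = (β ⟨(i : ℕ), i.isLt⟩ : ℕ) from vp_eq _ _ i.isLt] at h3
  simpa only [Fin.eta] using h3

lemma pone_eq_ones : pone = ones 1 := rfl

lemma pone_pds_ones (k : ℕ) (p : PermPt) :
    pdsP (ones (k + 1)) p = pdsP pone (pdsP (ones k) p) := by
  apply permPt_ext
  · show (k + 1) + p.1 = 1 + (k + p.1); omega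
  · intro x
    by_cases hx : x < (k + 1) + p.1
    · rw [vp_ones_pdsP (k + 1) p x hx, pone_eq_ones,
        vp_ones_pdsP 1 (pdsP (ones k) p) x (show x < 1 + (k + p.1) by omega)]
      by_cases h0 : x < 1
      · rw [if_pos h0, if_pos (by omega)]
      · rw [if_neg h0]
        have h2 : x - 1 < k + p.1 := by omega
        rw [vp_ones_pdsP k p (x - 1) h2]
        by_cases h3 : x < k + 1
        · rw [if_pos h3, if_pos (show x - 1 < k by omega)]; omega
        · rw [if_neg h3, if_neg (show ¬ x - 1 < k by omega)]
          have h4 : x - 1 - k = x - (k + 1) := by omega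
          rw [h4]; omega
    · rw [vp_out _ _ hx, vp_out _ _ (show ¬ x < 1 + (k + p.1) by omega)]

lemma ones_zero_pds (p : PermPt) : pdsP (ones 0) p = p := by
  apply permPt_ext
  · show 0 + p.1 = p.1; omega
  · intro x
    by_cases hx : x < p.1
    · rw [vp_ones_pdsP 0 p x (show x < 0 + p.1 by omega), if_neg (by omega)]
      simp
    · rw [vp_out _ _ (show ¬ x < 0 + p.1 by omega), vp_out _ _ hx]

lemma pds_mono {a b c d : PermPt} (h1 : ple a b) (h2 : ple c d) :
    ple (pdsP a c) (pdsP b d) := by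
  rw [ple_iff] at h1 h2 ⊢
  obtain ⟨f, fb, fm, fi⟩ := h1
  obtain ⟨g, gb, gm, gi⟩ := h2
  have hac : (pdsP a c).1 = a.1 + c.1 := rfl
  have hbd : (pdsP b d).1 = b.1 + d.1 := rfl
  refine ⟨fun x => if x < a.1 then f x else b.1 + g (x - a.1), ?_, ?_, ?_⟩
  · intro x hx
    dsimp only
    rw [hac] at hx; rw [hbd]
    by_cases h : x < a.1
    · rw [if_pos h]; have := fb x h; omega
    · rw [if_neg h]; have := gb (x - a.1) (by omega); omega
  · intro x y hxy hy
    dsimp only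
    rw [hac] at hy
    by_cases hya : y < a.1
    · rw [if_pos (by omega), if_pos hya]; exact fm x y hxy hya
    · rw [if_neg hya]
      by_cases hxa : x < a.1
      · rw [if_pos hxa]; have := fb x hxa; omega
      · rw [if_neg hxa]
        have := gm (x - a.1) (y - a.1) (by omega) (by omega)
        omega
  · intro x y hx hy
    dsimp only
    rw [hac] at hx hy
    rw [vp_pdsP a c x hx, vp_pdsP a c y hy]
    by_cases hxa : x < a.1 <;> by_cases hya : y < a.1
    · rw [if_pos hxa, if_pos hya, if_pos hxa, if_pos hya,
        vp_pdsP b d (f x) (by have := fb x hxa; omega),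
        vp_pdsP b d (f y) (by have := fb y hya; omega),
        if_pos (fb x hxa), if_pos (fb y hya)]
      exact fi x y hxa hya
    · rw [if_pos hxa, if_neg hya, if_pos hxa, if_neg hya,
        vp_pdsP b d (f x) (by have := fb x hxa; omega),
        vp_pdsP b d (b.1 + g (y - a.1)) (by have := gb (y - a.1) (by omega); omega),
        if_pos (fb x hxa), if_neg (by omega)]
      have e1 : b.1 + g (y - a.1) - b.1 = g (y - a.1) := by omega
      rw [e1]
      have := vp_lt a x hxa
      have := vp_lt b (f x) (fb x hxa)
      constructor <;> intro <;> omega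
    · rw [if_neg hxa, if_pos hya, if_neg hxa, if_pos hya,
        vp_pdsP b d (b.1 + g (x - a.1)) (by have := gb (x - a.1) (by omega); omega),
        vp_pdsP b d (f y) (by have := fb y hya; omega),
        if_neg (by omega), if_pos (fb y hya)]
      have e1 : b.1 + g (x - a.1) - b.1 = g (x - a.1) := by omega
      rw [e1]
      have := vp_lt a y hya
      have := vp_lt b (f y) (fb y hya)
      constructor <;> intro <;> omega
    · rw [if_neg hxa, if_neg hya, if_neg hxa, if_neg hya,
        vp_pdsP b d (b.1 + g (x - a.1)) (by have := gb (x - a.1) (by omega); omega),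
        vp_pdsP b d (b.1 + g (y - a.1)) (by have := gb (y - a.1) (by omega); omega),
        if_neg (by omega), if_neg (by omega)]
      have e1 : b.1 + g (x - a.1) - b.1 = g (x - a.1) := by omega
      have e2 : b.1 + g (y - a.1) - b.1 = g (y - a.1) := by omega
      rw [e1, e2]
      have := gi (x - a.1) (y - a.1) (by omega) (by omega)
      omega

lemma vp_pone_pds (p : PermPt) (x : ℕ) (hx : x < p.1) :
    vp (pdsP pone p) (x + 1) = 1 + vp p x := by
  rw [pone_eq_ones, vp_ones_pdsP 1 p (x + 1) (by omega), if_neg (by omega)]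
  simp

lemma vp_pone_pds_zero (p : PermPt) : vp (pdsP pone p) 0 = 0 := by
  rw [pone_eq_ones, vp_ones_pdsP 1 p 0 (by omega), if_pos (by omega)]

lemma pone_pds_cancel {p q : PermPt} (h : ple (pdsP pone p) (pdsP pone q)) :
    ple p q := by
  rw [ple_iff] at h ⊢
  obtain ⟨f, fb, fm, fi⟩ := h
  have hp1 : (pdsP pone p).1 = 1 + p.1 := rfl
  have hq1 : (pdsP pone q).1 = 1 + q.1 := rfl
  rw [hp1] at fm fi
  simp only [hp1, hq1] at fb
  have hf1 : ∀ x, x < p.1 → 1 ≤ f (x + 1) := by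
    intro x hx
    have := fm 0 (x + 1) (by omega) (by omega)
    omega
  refine ⟨fun x => f (x + 1) - 1, ?_, ?_, ?_⟩
  · intro x hx
    dsimp only
    have := fb (x + 1) (by omega)
    have := hf1 x hx
    omega
  · intro x y hxy hy
    dsimp only
    have := fm (x + 1) (y + 1) (by omega) (by omega)
    have := hf1 x (by omega)
    have := hf1 y hy
    omega
  · intro x y hx hy
    dsimp only
    have h1 := fi (x + 1) (y + 1) (by omega) (by omega)
    rw [vp_pone_pds p x hx, vp_pone_pds p y hy] at h1
    have hbx := fb (x + 1) (by omega)
    have hby := fb (y + 1) (by omega)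
    have ex : f (x + 1) = (f (x + 1) - 1) + 1 := by have := hf1 x hx; omega
    have ey : f (y + 1) = (f (y + 1) - 1) + 1 := by have := hf1 y hy; omega
    rw [ex, ey, vp_pone_pds q _ (by omega), vp_pone_pds q _ (by omega)] at h1
    omega

lemma main_lemma (σ τ : PermPt) (ℓ : ℕ) (τ' : PermPt) (hτ : τ = pdsP (ones ℓ) τ')
    (k : ℕ) (hk : τ'.1 ≤ k + 1 + σ.1) :
    IntervalIso (pdsP (ones k) σ) (pdsP (ones k) τ)
      (pdsP (ones (k + 1)) σ) (pdsP (ones (k + 1)) τ) (fun π => pdsP pone π) := by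
  refine ⟨?_, ?_, ?_⟩
  · intro π h1 h2
    constructor
    · show ple (pdsP (ones (k + 1)) σ) (pdsP pone π)
      rw [pone_pds_ones k σ]
      exact pds_mono (ple_refl pone) h1
    · show ple (pdsP pone π) (pdsP (ones (k + 1)) τ)
      rw [pone_pds_ones k τ]
      exact pds_mono (ple_refl pone) h2
  · intro ρ h1 h2
    have hσ1 : (pdsP (ones (k + 1)) σ).1 = (k + 1) + σ.1 := rfl
    have hτl : (pdsP (ones (k + 1)) τ).1 = (k + 1) + τ.1 := rfl
    have hl1 : (k + 1) + σ.1 ≤ ρ.1 := by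
      have := ple_len h1; rw [hσ1] at this; exact this
    have hρpos : 0 < ρ.1 := by omega
    have hτ1 : τ.1 = ℓ + τ'.1 := by rw [hτ]; rfl
    set K := k + 1 + ℓ with hK
    have hvB : ∀ x, x < (k + 1) + τ.1 →
        vp (pdsP (ones (k + 1)) τ) x = if x < K then x else K + vp τ' (x - K) := by
      intro x hx
      rw [vp_ones_pdsP (k + 1) τ x hx]
      by_cases hh : x < k + 1
      · rw [if_pos hh, if_pos (by omega)]
      · rw [if_neg hh, hτ, vp_ones_pdsP ℓ τ' (x - (k + 1)) (by omega)]
        by_cases h2' : x < K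
        · rw [if_pos (show x - (k + 1) < ℓ by omega), if_pos h2']; omega
        · rw [if_neg (show ¬ x - (k + 1) < ℓ by omega), if_neg h2']
          have e1 : x - (k + 1) - ℓ = x - K := by omega
          rw [e1]; omega
    obtain ⟨f, fb, fm, fi⟩ := ple_iff.mp h2
    rw [hτl] at fb
    have hρ0 : vp ρ 0 = 0 := by
      by_cases hcase : f 0 < K
      · have hmin : ∀ j, j < ρ.1 → vp ρ 0 ≤ vp ρ j := by
          intro j hj
          rcases Nat.eq_zero_or_pos j with rfl | hjpos
          · exact le_refl _
          · rw [fi 0 j hρpos hj]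
            have hfj : f 0 < f j := fm 0 j hjpos hj
            rw [hvB (f 0) (fb 0 hρpos), hvB (f j) (fb j hj), if_pos hcase]
            by_cases hh : f j < K
            · rw [if_pos hh]; omega
            · rw [if_neg hh]; omega
        have hj0lt : (ρ.2.symm ⟨0, hρpos⟩ : ℕ) < ρ.1 := (ρ.2.symm ⟨0, hρpos⟩).isLt
        have hvj0 : vp ρ ((ρ.2.symm ⟨0, hρpos⟩ : Fin ρ.1) : ℕ) = 0 := by
          rw [vp_eq ρ _ hj0lt]
          simp only [Fin.eta, Equiv.apply_symm_apply]
        have := hmin _ hj0lt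
        omega
      · have hall : ∀ j, j < ρ.1 → K ≤ f j := by
          intro j hj
          rcases Nat.eq_zero_or_pos j with rfl | hjpos
          · omega
          · have := fm 0 j hjpos hj; omega
        have hple : ple ρ τ' := by
          rw [ple_iff]
          refine ⟨fun x => f x - K, ?_, ?_, ?_⟩
          · intro x hx
            dsimp only
            have := fb x hx
            have := hall x hx
            omega
          · intro x y hxy hy
            dsimp only
            have := fm x y hxy hy
            have := hall x (by omega)
            have := hall y hy
            omega
          · intro x y hx hy
            dsimp only
            rw [fi x y hx hy, hvB (f x) (fb x hx), hvB (f y) (fb y hy),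
              if_neg (by have := hall x hx; omega), if_neg (by have := hall y hy; omega)]
            omega
        have hle : ρ.1 ≤ τ'.1 := ple_len hple
        have heqlen : (pdsP (ones (k + 1)) σ).1 = ρ.1 := by rw [hσ1]; omega
        have heq := ple_eq_of_len h1 heqlen
        rw [← heq, vp_ones_pdsP (k + 1) σ 0 (by omega), if_pos (by omega)]
    clear fb fm fi hvB
    obtain ⟨m, e⟩ := ρ
    have hm : 0 < m := hρpos
    cases m with
    | zero => omega
    | succ n =>
    have he0 : e 0 = 0 := by
      have h := hρ0
      rw [vp_eq _ 0 (Nat.succ_pos n)] at h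
      exact Fin.ext h
    have hne : ∀ i : Fin n, e i.succ ≠ 0 := by
      intro i h
      exact (Fin.succ_ne_zero i) (e.injective (h.trans he0.symm))
    have hne' : ∀ j : Fin n, e.symm j.succ ≠ 0 := by
      intro j h
      have h2 : j.succ = e 0 := by
        have := congrArg e h
        simpa using this
      rw [he0] at h2
      exact Fin.succ_ne_zero j h2
    set e' : Equiv.Perm (Fin n) :=
      { toFun := fun i => (e i.succ).pred (hne i)
        invFun := fun j => (e.symm j.succ).pred (hne' j)
        left_inv := by intro i; simp
        right_inv := by intro j; simp } with he'
    have key : ∀ x, x < n + 1 → 0 < x →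
        vp (⟨n + 1, e⟩ : PermPt) x = vp (⟨n, e'⟩ : PermPt) (x - 1) + 1 := by
      intro x hx hx0
      have hx1 : x - 1 < n := by omega
      have hs : (⟨x - 1, hx1⟩ : Fin n).succ = ⟨x, hx⟩ := by
        apply Fin.ext
        show (x - 1) + 1 = x
        omega
      rw [vp_eq _ x hx, vp_eq _ (x - 1) hx1, he']
      simp only [Equiv.coe_fn_mk, hs, Fin.coe_pred]
      have hnz : (e ⟨x, hx⟩ : ℕ) ≠ 0 := by
        intro h
        exact hne ⟨x - 1, hx1⟩ (by rw [hs]; exact Fin.ext h)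
      omega
    have ρeq : (⟨n + 1, e⟩ : PermPt) = pdsP pone ⟨n, e'⟩ := by
      apply permPt_ext
      · show n + 1 = 1 + n; omega
      · intro x
        rcases Nat.lt_or_ge x (n + 1) with hx | hx
        · rcases Nat.eq_zero_or_pos x with rfl | hx0
          · rw [hρ0, vp_pone_pds_zero]
          · rw [key x hx hx0, pone_eq_ones,
              vp_ones_pdsP 1 (⟨n, e'⟩ : PermPt) x (show x < 1 + n by omega),
              if_neg (by omega)]
            omega
        · rw [vp_out _ _ (show ¬ x < n + 1 by omega),
            vp_out _ _ (show ¬ x < 1 + n by omega)]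
    refine ⟨⟨n, e'⟩, ?_, ?_, ρeq⟩
    · apply pone_pds_cancel
      rw [← ρeq, ← pone_pds_ones k σ]
      exact h1
    · apply pone_pds_cancel
      rw [← ρeq, ← pone_pds_ones k τ]
      exact h2
  · intro π π' _ _ _ _
    exact ⟨fun h => pds_mono (ple_refl pone) h, fun h => pone_pds_cancel h⟩

/-- For any interval `[σ,τ]`, the map `π ↦ 1 ⊕ π` gives an isomorphism
`[1^k ⊕ σ, 1^k ⊕ τ] ≅ [1^{k+1} ⊕ σ, 1^{k+1} ⊕ τ]` whenever
`k ≥ |τ| − |σ| − 1`; more generally, if `τ = 1^ℓ ⊕ τ'`, this holds whenever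
`k ≥ |τ| − |σ| − ℓ − 1`. -/
theorem adding_ones_stabilizes (σ τ : PermPt) (hστ : ple σ τ) :
    (∀ k : ℕ, τ.1 - σ.1 - 1 ≤ k →
      IntervalIso (pdsP (ones k) σ) (pdsP (ones k) τ)
        (pdsP (ones (k + 1)) σ) (pdsP (ones (k + 1)) τ)
        (fun π => pdsP pone π)) ∧
    (∀ (ℓ : ℕ) (τ' : PermPt), τ = pdsP (ones ℓ) τ' →
      ∀ k : ℕ, τ.1 - σ.1 - ℓ - 1 ≤ k →
      IntervalIso (pdsP (ones k) σ) (pdsP (ones k) τ)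
        (pdsP (ones (k + 1)) σ) (pdsP (ones (k + 1)) τ)
        (fun π => pdsP pone π)) := by
  constructor
  · intro k hk
    exact main_lemma σ τ 0 τ (ones_zero_pds τ).symm k (by omega)
  · intro ℓ τ' hτ k hk
    have hτ1 : τ.1 = ℓ + τ'.1 := by rw [hτ]; rfl
    exact main_lemma σ τ ℓ τ' hτ k (by omega)
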